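/- Let τ > 0, L ≥ L_F and r > 0, and suppose x ∈ ℱ and T_{L,τ}(x) ∈ ℱ. Then τ/2 + f₂(x)/(2τ) − f₁(T_{L,τ}(x)) ≥ L·r²·κ( Δ_r(x)/(2τ·L·r²) ). (Lemma 3: decrease of the residual measured by the local model increment.) -/

import Mathlib

/-- The regularized local model `ψ_{x,L,τ}(y)`. -/
noncomputable def psi {n m : ℕ}
    (F : EuclideanSpace ℝ (Fin n) → EuclideanSpace ℝ (Fin m))
    (F' : EuclideanSpace ℝ (Fin n) →
      EuclideanSpace ℝ (Fin n) →L[ℝ] EuclideanSpace ℝ (Fin m))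
    (x : EuclideanSpace ℝ (Fin n)) (L τ : ℝ) (y : EuclideanSpace ℝ (Fin n)) : ℝ :=
  τ / 2 + ‖F x + F' x (y - x)‖ ^ 2 / (2 * τ) + L / 2 * ‖y - x‖ ^ 2

/-- `κ(t) = t²/2` for `0 ≤ t ≤ 1`, `κ(t) = t − 1/2` for `t > 1`. -/
noncomputable def kappa (t : ℝ) : ℝ := if t ≤ 1 then t ^ 2 / 2 else t - 1 / 2

/-- `Δ_r(x) = f₂(x) − inf {φ(x,y)² : ‖y − x‖ ≤ r}`. -/
noncomputable def Delta {n m : ℕ}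
    (F : EuclideanSpace ℝ (Fin n) → EuclideanSpace ℝ (Fin m))
    (F' : EuclideanSpace ℝ (Fin n) →
      EuclideanSpace ℝ (Fin n) →L[ℝ] EuclideanSpace ℝ (Fin m))
    (r : ℝ) (x : EuclideanSpace ℝ (Fin n)) : ℝ :=
  ‖F x‖ ^ 2 - sInf ((fun y => ‖F x + F' x (y - x)‖ ^ 2) '' Metric.closedBall x r)

open Set

/-- Quadratic Taylor bound from a Lipschitz derivative on a convex set. -/
lemma taylor_quad_bound {n m : ℕ}
    (F : EuclideanSpace ℝ (Fin n) → EuclideanSpace ℝ (Fin m))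
    (F' : EuclideanSpace ℝ (Fin n) →
      EuclideanSpace ℝ (Fin n) →L[ℝ] EuclideanSpace ℝ (Fin m))
    (hF : ∀ x, HasFDerivAt F (F' x) x)
    (𝓕 : Set (EuclideanSpace ℝ (Fin n))) (h𝓕conv : Convex ℝ 𝓕)
    (LF : ℝ)
    (hLip : ∀ x ∈ 𝓕, ∀ y ∈ 𝓕, ‖F' y - F' x‖ ≤ LF * ‖y - x‖)
    (x : EuclideanSpace ℝ (Fin n)) (hx : x ∈ 𝓕)
    (T : EuclideanSpace ℝ (Fin n)) (hT : T ∈ 𝓕) :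
    ‖F T - F x - F' x (T - x)‖ ≤ LF / 2 * ‖T - x‖ ^ 2 := by
  set v := T - x with hv
  have hmem : ∀ t ∈ Icc (0:ℝ) 1, x + t • v ∈ 𝓕 := by
    intro t ht
    have h := h𝓕conv hx hT (sub_nonneg.2 ht.2) ht.1 (by ring)
    have he : x + t • v = (1 - t) • x + t • T := by
      rw [hv]; module
    rw [he]; exact h
  have hg' : ∀ t : ℝ, HasDerivAt
      (fun t : ℝ => F (x + t • v) - F x - t • (F' x v))
      (F' (x + t • v) v - F' x v) t := by
    intro t
    have h1 : HasDerivAt (fun t : ℝ => x + t • v) v t := by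
      simpa using ((hasDerivAt_id t).smul_const v).const_add x
    have h2 : HasDerivAt (fun t : ℝ => F (x + t • v)) (F' (x + t • v) v) t :=
      (hF _).comp_hasDerivAt t h1
    have h3 : HasDerivAt (fun t : ℝ => t • (F' x v)) (F' x v) t := by
      simpa using (hasDerivAt_id t).smul_const (F' x v)
    exact (h2.sub_const (F x)).sub h3
  have key := image_norm_le_of_norm_deriv_right_le_deriv_boundary
    (f := fun t : ℝ => F (x + t • v) - F x - t • (F' x v)) (a := 0) (b := 1)
    (f' := fun t : ℝ => F' (x + t • v) v - F' x v)
    (fun t _ => (hg' t).continuousAt.continuousWithinAt)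
    (fun t _ => (hg' t).hasDerivWithinAt)
    (B := fun t => LF * ‖v‖ ^ 2 / 2 * t ^ 2)
    (B' := fun t => LF * ‖v‖ ^ 2 / 2 * (2 * t ^ 1))
    (by simp)
    (fun s => (hasDerivAt_pow 2 s).const_mul _)
    ?_
  · have h1 := key (right_mem_Icc.2 zero_le_one)
    have he : x + (1:ℝ) • v = T := by rw [hv]; module
    rw [he] at h1
    simpa using h1.trans_eq (by ring)
  · intro t ht
    have hmemt : x + t • v ∈ 𝓕 := hmem t ⟨ht.1, ht.2.le⟩
    have h1 : ‖F' (x + t • v) v - F' x v‖ ≤ ‖F' (x + t • v) - F' x‖ * ‖v‖ := by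
      simpa using (F' (x + t • v) - F' x).le_opNorm v
    have h2 : ‖F' (x + t • v) - F' x‖ ≤ LF * ‖t • v‖ := by
      simpa using hLip x hx (x + t • v) hmemt
    have h3 : ‖t • v‖ = t * ‖v‖ := by
      rw [norm_smul, Real.norm_eq_abs, abs_of_nonneg ht.1]
    have hv0 : (0:ℝ) ≤ ‖v‖ := norm_nonneg v
    calc ‖F' (x + t • v) v - F' x v‖ ≤ ‖F' (x + t • v) - F' x‖ * ‖v‖ := h1
      _ ≤ LF * ‖t • v‖ * ‖v‖ := by
          apply mul_le_mul_of_nonneg_right h2 hv0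
      _ = LF * ‖v‖ ^ 2 / 2 * (2 * t ^ 1) := by rw [h3]; ring

set_option maxHeartbeats 1000000 in
/-- **Lemma 3.** Decrease of the residual measured by the local model increment:
`τ/2 + f₂(x)/(2τ) − f₁(T_{L,τ}(x)) ≥ L r² κ(Δ_r(x)/(2τLr²))`. -/
theorem decrease_by_model_increment
    {n m : ℕ}
    (F : EuclideanSpace ℝ (Fin n) → EuclideanSpace ℝ (Fin m))
    (F' : EuclideanSpace ℝ (Fin n) →
      EuclideanSpace ℝ (Fin n) →L[ℝ] EuclideanSpace ℝ (Fin m))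
    (hF : ∀ x, HasFDerivAt F (F' x) x)
    (𝓕 : Set (EuclideanSpace ℝ (Fin n)))
    (h𝓕closed : IsClosed 𝓕) (h𝓕conv : Convex ℝ 𝓕)
    (LF : ℝ) (hLF : 0 < LF)
    (hLip : ∀ x ∈ 𝓕, ∀ y ∈ 𝓕, ‖F' y - F' x‖ ≤ LF * ‖y - x‖)
    (x : EuclideanSpace ℝ (Fin n)) (hx : x ∈ 𝓕)
    (L τ r : ℝ) (hτ : 0 < τ) (hL : LF ≤ L) (hr : 0 < r)
    (T : EuclideanSpace ℝ (Fin n))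
    (hTmin : ∀ y, psi F F' x L τ T ≤ psi F F' x L τ y)
    (hT : T ∈ 𝓕) :
    L * r ^ 2 * kappa (Delta F F' r x / (2 * τ * L * r ^ 2))
      ≤ τ / 2 + ‖F x‖ ^ 2 / (2 * τ) - ‖F T‖ := by
  have hLpos : 0 < L := hLF.trans_le hL
  have h2τ : (0:ℝ) < 2 * τ := by linarith
  set a : ℝ := ‖F x‖ with ha
  set P : ℝ := ‖F T‖ with hP
  set G : ℝ := τ / 2 + a ^ 2 / (2 * τ) - P with hG
  -- Step 1: ‖F T‖ ≤ ψ(T)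
  have htay : ‖F T - F x - F' x (T - x)‖ ≤ LF / 2 * ‖T - x‖ ^ 2 :=
    taylor_quad_bound F F' hF 𝓕 h𝓕conv LF hLip x hx T hT
  have hφ : P ≤ ‖F x + F' x (T - x)‖ + LF / 2 * ‖T - x‖ ^ 2 := by
    have hdec : F T = (F x + F' x (T - x)) + (F T - F x - F' x (T - x)) := by abel
    calc P = ‖(F x + F' x (T - x)) + (F T - F x - F' x (T - x))‖ := by rw [hP, ← hdec]
      _ ≤ ‖F x + F' x (T - x)‖ + ‖F T - F x - F' x (T - x)‖ := norm_add_le _ _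
      _ ≤ _ := by linarith
  have hamgm : ‖F x + F' x (T - x)‖ ≤ τ / 2 + ‖F x + F' x (T - x)‖ ^ 2 / (2 * τ) := by
    set b := ‖F x + F' x (T - x)‖
    have h1 : τ / 2 + b ^ 2 / (2 * τ) - b = (b - τ) ^ 2 / (2 * τ) := by
      field_simp; ring
    have h2 : 0 ≤ (b - τ) ^ 2 / (2 * τ) := div_nonneg (sq_nonneg _) h2τ.le
    linarith
  have hψT : P ≤ psi F F' x L τ T := by
    have hq : LF / 2 * ‖T - x‖ ^ 2 ≤ L / 2 * ‖T - x‖ ^ 2 := by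
      nlinarith [sq_nonneg ‖T - x‖]
    unfold psi
    linarith
  -- gap nonneg
  have hpsix : psi F F' x L τ x = τ / 2 + a ^ 2 / (2 * τ) := by
    simp [psi, ha]
  have hG0 : 0 ≤ G := by
    have := hψT.trans ((hTmin x).trans_eq hpsix)
    rw [hG]; linarith
  -- the set S
  set S := (fun y => ‖F x + F' x (y - x)‖ ^ 2) '' Metric.closedBall x r with hS
  have hSbdd : BddBelow S := by
    refine ⟨0, ?_⟩
    rintro s ⟨y, _, rfl⟩
    positivity
  have hmemS : a ^ 2 ∈ S := ⟨x, Metric.mem_closedBall_self hr.le, by simp [ha]⟩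
  have hD0 : 0 ≤ Delta F F' r x := by
    have := csInf_le hSbdd hmemS
    rw [Delta]; rw [hS] at this; linarith
  -- KEY inequality
  have key : ∀ α : ℝ, 0 < α → α ≤ 1 →
      α * Delta F F' r x / (2 * τ) - L * α ^ 2 * r ^ 2 / 2 ≤ G := by
    intro α hα0 hα1
    have hlow : ∀ s ∈ S, a ^ 2 - 2 * τ / α * (G + L * α ^ 2 * r ^ 2 / 2) ≤ s := by
      rintro s ⟨y, hy, rfl⟩
      have hyr : ‖y - x‖ ≤ r := by
        rw [Metric.mem_closedBall, dist_eq_norm] at hy; exact hy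
      set b : ℝ := ‖F x + F' x (y - x)‖ with hb
      -- convexity bound on the linearized residual at the interpolated point
      have hc1 : ‖F x + F' x (α • (y - x))‖ ≤ (1 - α) * a + α * b := by
        have he : F x + F' x (α • (y - x))
            = (1 - α) • F x + α • (F x + F' x (y - x)) := by
          rw [map_smul]; module
        rw [he]
        calc ‖(1 - α) • F x + α • (F x + F' x (y - x))‖
            ≤ ‖(1 - α) • F x‖ + ‖α • (F x + F' x (y - x))‖ := norm_add_le _ _
          _ = (1 - α) * a + α * b := by
              rw [norm_smul, norm_smul, Real.norm_eq_abs, Real.norm_eq_abs,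
                abs_of_nonneg (by linarith), abs_of_nonneg hα0.le]
      have hc2 : ‖F x + F' x (α • (y - x))‖ ^ 2 ≤ (1 - α) * a ^ 2 + α * b ^ 2 := by
        have hb0 : (0:ℝ) ≤ b := norm_nonneg _
        have ha0 : (0:ℝ) ≤ a := norm_nonneg _
        have hn0 : (0:ℝ) ≤ ‖F x + F' x (α • (y - x))‖ := norm_nonneg _
        nlinarith [sq_nonneg (a - b), mul_nonneg hα0.le (sub_nonneg.2 hα1),
          mul_nonneg (sub_nonneg.2 hα1) (mul_nonneg ha0 hb0)]
      -- ψ at the interpolated point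
      have hψy : psi F F' x L τ (x + α • (y - x))
          ≤ τ / 2 + ((1 - α) * a ^ 2 + α * b ^ 2) / (2 * τ) + L / 2 * (α ^ 2 * r ^ 2) := by
        unfold psi
        have h1 : x + α • (y - x) - x = α • (y - x) := by abel
        rw [h1]
        have h2 : ‖α • (y - x)‖ ^ 2 = α ^ 2 * ‖y - x‖ ^ 2 := by
          rw [norm_smul, Real.norm_eq_abs, mul_pow, sq_abs]
        have h3 : α ^ 2 * ‖y - x‖ ^ 2 ≤ α ^ 2 * r ^ 2 :=
          mul_le_mul_of_nonneg_left (pow_le_pow_left₀ (norm_nonneg _) hyr 2) (sq_nonneg α)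
        have h4 : ‖F x + F' x (α • (y - x))‖ ^ 2 / (2 * τ)
            ≤ ((1 - α) * a ^ 2 + α * b ^ 2) / (2 * τ) :=
          div_le_div_of_nonneg_right hc2 h2τ.le
        have h5 : L / 2 * ‖α • (y - x)‖ ^ 2 ≤ L / 2 * (α ^ 2 * r ^ 2) := by
          rw [h2]; nlinarith
        linarith
      have hchain : P ≤ τ / 2 + ((1 - α) * a ^ 2 + α * b ^ 2) / (2 * τ)
          + L / 2 * (α ^ 2 * r ^ 2) := hψT.trans ((hTmin _).trans hψy)
      -- rearrange
      have hpos : (0:ℝ) < 2 * τ / α := by positivity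
      have h2 : 0 ≤ (2 * τ / α) * ((τ / 2 + ((1 - α) * a ^ 2 + α * b ^ 2) / (2 * τ)
          + L / 2 * (α ^ 2 * r ^ 2)) - P) := mul_nonneg hpos.le (by linarith)
      have heq : (2 * τ / α) * ((τ / 2 + ((1 - α) * a ^ 2 + α * b ^ 2) / (2 * τ)
          + L / 2 * (α ^ 2 * r ^ 2)) - P)
          = b ^ 2 - (a ^ 2 - 2 * τ / α * (G + L * α ^ 2 * r ^ 2 / 2)) := by
        rw [hG]
        field_simp
        ring
      rw [heq] at h2
      linarith
    have hsinf : a ^ 2 - 2 * τ / α * (G + L * α ^ 2 * r ^ 2 / 2) ≤ sInf S :=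
      le_csInf ⟨a ^ 2, hmemS⟩ hlow
    have hΔ : Delta F F' r x ≤ 2 * τ / α * (G + L * α ^ 2 * r ^ 2 / 2) := by
      rw [Delta, ← hS, ← ha]; linarith
    have h6 : α * Delta F F' r x ≤ 2 * τ * (G + L * α ^ 2 * r ^ 2 / 2) := by
      calc α * Delta F F' r x ≤ α * (2 * τ / α * (G + L * α ^ 2 * r ^ 2 / 2)) :=
            mul_le_mul_of_nonneg_left hΔ hα0.le
        _ = 2 * τ * (G + L * α ^ 2 * r ^ 2 / 2) := by field_simp
    have h7 : α * Delta F F' r x / (2 * τ) ≤ G + L * α ^ 2 * r ^ 2 / 2 := by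
      rw [div_le_iff₀ h2τ]
      exact h6.trans_eq (by ring)
    linarith
  -- endgame
  set t : ℝ := Delta F F' r x / (2 * τ * L * r ^ 2) with htdef
  have hc : (2 * τ * L * r ^ 2) ≠ 0 := by positivity
  have htD : Delta F F' r x = t * (2 * τ * L * r ^ 2) := (div_mul_cancel₀ _ hc).symm
  have ht0 : 0 ≤ t := div_nonneg hD0 (by positivity)
  by_cases htle : t ≤ 1
  · rw [kappa, if_pos htle]
    rcases eq_or_lt_of_le ht0 with h0 | hpos
    · rw [← h0]; simpa using hG0
    · have hk := key t hpos htle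
      have heq2 : t * Delta F F' r x / (2 * τ) = L * r ^ 2 * t ^ 2 := by
        rw [htD]; field_simp
      rw [heq2] at hk
      nlinarith
  · push_neg at htle
    rw [kappa, if_neg (not_le.2 htle)]
    have hk := key 1 one_pos le_rfl
    have heq2 : 1 * Delta F F' r x / (2 * τ) = L * r ^ 2 * t := by
      rw [htD]; field_simp
    rw [heq2] at hk
    nlinarith
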